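/- Let A, B, C be nonzero real numbers and α, β, γ be nonzero real numbers, and define δ = A²α² + B²β² + C²γ² − 2ABαβ − 2ACαγ − 2BCβγ. Then δ < 0 if and only if Aα, Bβ, Cγ all have the same sign and the three triangle inequalities hold: √|Aα| < √|Bβ| + √|Cγ|, √|Bβ| < √|Aα| + √|Cγ|, √|Cγ| < √|Aα| + √|Bβ|. -/
import Mathlib

open Real

lemma tri_pos (x y z : ℝ) (hx : 0 < x) (hy : 0 < y) (hz : 0 < z) :
    x^2 + y^2 + z^2 - 2*x*y - 2*x*z - 2*y*z < 0 ↔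
    Real.sqrt x < Real.sqrt y + Real.sqrt z ∧
    Real.sqrt y < Real.sqrt x + Real.sqrt z ∧
    Real.sqrt z < Real.sqrt x + Real.sqrt y := by
  set a := Real.sqrt x with ha
  set b := Real.sqrt y with hb
  set c := Real.sqrt z with hc
  have hax : a^2 = x := Real.sq_sqrt hx.le
  have hby : b^2 = y := Real.sq_sqrt hy.le
  have hcz : c^2 = z := Real.sq_sqrt hz.le
  have hpa : 0 < a := Real.sqrt_pos.mpr hx
  have hpb : 0 < b := Real.sqrt_pos.mpr hy
  have hpc : 0 < c := Real.sqrt_pos.mpr hz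
  rw [← hax, ← hby, ← hcz]
  constructor
  · intro h
    refine ⟨?_, ?_, ?_⟩
    · by_contra hcon
      push_neg at hcon
      have h1 : (0:ℝ) ≤ (a+b+c)*((a-b-c)*((a+c-b)*(a+b-c))) :=
        mul_nonneg (by linarith) (mul_nonneg (by linarith) (mul_nonneg (by linarith) (by linarith)))
      nlinarith [h1]
    · by_contra hcon
      push_neg at hcon
      have h1 : (0:ℝ) ≤ (a+b+c)*((b-a-c)*((b+c-a)*(a+b-c))) :=
        mul_nonneg (by linarith) (mul_nonneg (by linarith) (mul_nonneg (by linarith) (by linarith)))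
      nlinarith [h1]
    · by_contra hcon
      push_neg at hcon
      have h1 : (0:ℝ) ≤ (a+b+c)*((c-a-b)*((b+c-a)*(a+c-b))) :=
        mul_nonneg (by linarith) (mul_nonneg (by linarith) (mul_nonneg (by linarith) (by linarith)))
      nlinarith [h1]
  · rintro ⟨h1, h2, h3⟩
    nlinarith [mul_pos (mul_pos (sub_pos.mpr h1) (sub_pos.mpr h2)) (sub_pos.mpr h3), add_pos (add_pos hpa hpb) hpc, mul_pos (mul_pos (mul_pos (sub_pos.mpr h1) (sub_pos.mpr h2)) (sub_pos.mpr h3)) (add_pos (add_pos hpa hpb) hpc)]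

theorem stmt0 (A B C α β γ : ℝ) (hA : A ≠ 0) (hB : B ≠ 0) (hC : C ≠ 0)
    (hα : α ≠ 0) (hβ : β ≠ 0) (hγ : γ ≠ 0) :
    A^2*α^2 + B^2*β^2 + C^2*γ^2 - 2*A*B*α*β - 2*A*C*α*γ - 2*B*C*β*γ < 0 ↔
    (((0 < A*α ∧ 0 < B*β ∧ 0 < C*γ) ∨ (A*α < 0 ∧ B*β < 0 ∧ C*γ < 0)) ∧
      Real.sqrt |A*α| < Real.sqrt |B*β| + Real.sqrt |C*γ| ∧
      Real.sqrt |B*β| < Real.sqrt |A*α| + Real.sqrt |C*γ| ∧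
      Real.sqrt |C*γ| < Real.sqrt |A*α| + Real.sqrt |B*β|) := by
  have hx : A*α ≠ 0 := mul_ne_zero hA hα
  have hy : B*β ≠ 0 := mul_ne_zero hB hβ
  have hz : C*γ ≠ 0 := mul_ne_zero hC hγ
  set x := A*α with hxd
  set y := B*β with hyd
  set z := C*γ with hzd
  have hδ : A^2*α^2 + B^2*β^2 + C^2*γ^2 - 2*A*B*α*β - 2*A*C*α*γ - 2*B*C*β*γ
      = x^2 + y^2 + z^2 - 2*x*y - 2*x*z - 2*y*z := by rw [hxd, hyd, hzd]; ring
  rw [hδ]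
  constructor
  · intro h
    have hyz : 0 < y*z := by nlinarith [sq_nonneg (x - y - z)]
    have hxz : 0 < x*z := by nlinarith [sq_nonneg (y - x - z)]
    have hxy : 0 < x*y := by nlinarith [sq_nonneg (z - x - y)]
    rcases hx.lt_or_gt with hxn | hxp
    · have hyn : y < 0 := by
        rcases hy.lt_or_gt with h' | h'
        · exact h'
        · nlinarith
      have hzn : z < 0 := by
        rcases hz.lt_or_gt with h' | h'
        · exact h'
        · nlinarith
      have := (tri_pos (-x) (-y) (-z) (by linarith) (by linarith) (by linarith)).mp (by nlinarith)
      rw [abs_of_neg hxn, abs_of_neg hyn, abs_of_neg hzn]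
      exact ⟨Or.inr ⟨hxn, hyn, hzn⟩, this⟩
    · have hyp : 0 < y := by
        rcases hy.lt_or_gt with h' | h'
        · nlinarith
        · exact h'
      have hzp : 0 < z := by
        rcases hz.lt_or_gt with h' | h'
        · nlinarith
        · exact h'
      have := (tri_pos x y z hxp hyp hzp).mp h
      rw [abs_of_pos hxp, abs_of_pos hyp, abs_of_pos hzp]
      exact ⟨Or.inl ⟨hxp, hyp, hzp⟩, this⟩
  · rintro ⟨hsign | hsign, ht⟩
    · obtain ⟨hxp, hyp, hzp⟩ := hsign
      rw [abs_of_pos hxp, abs_of_pos hyp, abs_of_pos hzp] at ht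
      exact (tri_pos x y z hxp hyp hzp).mpr ht
    · obtain ⟨hxn, hyn, hzn⟩ := hsign
      rw [abs_of_neg hxn, abs_of_neg hyn, abs_of_neg hzn] at ht
      have := (tri_pos (-x) (-y) (-z) (by linarith) (by linarith) (by linarith)).mpr ht
      nlinarith
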